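/- arXiv:math/0603243 — 5 statements merged into one kernel-verified Lean document; each statement's English description precedes it below -/
import Mathlib

section
/- For fractional ideals I ⊇ J of R, the length of the R-module I/J equals the cardinality of v(I) \ v(J), where v(I) denotes the set of valuations of nonzero elements of I. -/
open Submodule IsLocalRing

noncomputable section

/-- Length of an `R`-module, defined as the Krull dimension of its submodule lattice. -/
def modLength (R : Type*) [Ring R] (M : Type*) [AddCommGroup M] [Module R M] : WithBot ℕ∞ :=
  Order.krullDim (Submodule R M)

/-- Length of the quotient `I / J` for submodules `J ≤ I` of an ambient module. -/
def qlen (R : Type*) [CommRing R] {K : Type*} [AddCommGroup K] [Module R K]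
    (I J : Submodule R K) : WithBot ℕ∞ :=
  modLength R (I ⧸ (J.comap I.subtype))

/-- The image of an ideal of `R` in `K`, viewed as an `R`-submodule of `K`. -/
def idl (R : Type*) [CommRing R] (K : Type*) [CommRing K] [Algebra R K] (I : Ideal R) :
    Submodule R K :=
  Submodule.map (Algebra.linearMap R K) I

/-- The blowing-up `Λ(I) = ⋃ₙ (Iⁿ : Iⁿ)` of `R` along `I`, inside `K`. -/
def blowup (R : Type*) [CommRing R] (K : Type*) [CommRing K] [Algebra R K] (I : Ideal R) :
    Submodule R K :=
  ⨆ n : ℕ, (idl R K I ^ n) / (idl R K I ^ n)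

/-- The set of values of the nonzero elements of a fractional ideal. -/
def vvals {R : Type*} [CommRing R] {K : Type*} [CommRing K] [Algebra R K]
    (v : K → WithTop ℤ) (J : Submodule R K) : Set (WithTop ℤ) :=
  v '' {y | y ∈ J ∧ y ≠ 0}

section Aux

variable {R : Type*} [CommRing R] {K : Type*} [Field K] [Algebra R K]

/-- values submodule -/
def Vge (v : K → WithTop ℤ) (hz : v 0 = ⊤)
    (hadd : ∀ y z : K, min (v y) (v z) ≤ v (y + z))
    (hsm : ∀ (r : R) (x : K), v x ≤ v (r • x)) (c : WithTop ℤ) : Submodule R K where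
  carrier := {x | c ≤ v x}
  add_mem' := fun {a b} ha hb => le_trans (le_min ha hb) (hadd a b)
  zero_mem' := by simp [Set.mem_setOf_eq, hz]
  smul_mem' := fun r x hx => le_trans hx (hsm r x)

theorem mem_Vge {v : K → WithTop ℤ} {hz hadd hsm} {c : WithTop ℤ} {x : K} :
    x ∈ Vge (R := R) v hz hadd hsm c ↔ c ≤ v x := Iff.rfl

theorem v_one {v : K → WithTop ℤ} (hv0 : ∀ y : K, v y = ⊤ ↔ y = 0)
    (hvmul : ∀ y z : K, v (y * z) = v y + v z) : v 1 = 0 := by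
  have h : v (1:K) = v 1 + v 1 := by simpa using (hvmul 1 1)
  have h1 : v (1 : K) ≠ ⊤ := by simp [hv0]
  lift (v (1:K)) to ℤ using h1 with a
  have : (a:ℤ) = a + a := by exact_mod_cast h
  have : (a:ℤ) = 0 := by omega
  exact_mod_cast this


theorem v_neg {v : K → WithTop ℤ} (hv0 : ∀ y : K, v y = ⊤ ↔ y = 0)
    (hvmul : ∀ y z : K, v (y * z) = v y + v z) (x : K) : v (-x) = v x := by
  have hm1 : v (-1 : K) = 0 := by
    have h : v ((-1 : K) * (-1)) = v (-1) + v (-1) := hvmul (-1) (-1)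
    rw [show ((-1:K) * (-1)) = 1 by ring, v_one hv0 hvmul] at h
    have h1 : v (-1 : K) ≠ ⊤ := by
      rw [Ne, hv0]; norm_num
    lift (v (-1:K)) to ℤ using h1 with a
    have : (0:ℤ) = a + a := by exact_mod_cast h
    have : (a:ℤ) = 0 := by omega
    exact_mod_cast this
  calc v (-x) = v ((-1) * x) := by ring_nf
    _ = v (-1) + v x := hvmul _ _
    _ = v x := by rw [hm1, zero_add]

/-- A nonempty set of non-top values bounded above has a maximum. -/
theorem exists_max_val (S : Set (WithTop ℤ)) (hne : S.Nonempty) (b : ℤ)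
    (hub : ∀ w ∈ S, w ≤ (b : WithTop ℤ)) (hnt : ∀ w ∈ S, w ≠ ⊤) :
    ∃ m ∈ S, ∀ w ∈ S, w ≤ m := by
  set T : Set ℤ := {z : ℤ | (z : WithTop ℤ) ∈ S} with hT
  have hTne : ∃ z : ℤ, z ∈ T := by
    obtain ⟨w, hw⟩ := hne
    lift w to ℤ using hnt w hw with z
    exact ⟨z, hw⟩
  have hTbdd : ∃ bb : ℤ, ∀ z ∈ T, z ≤ bb := by
    refine ⟨b, fun z hz => ?_⟩
    exact_mod_cast hub z hz
  obtain ⟨m, hmT, hmax⟩ := Int.exists_greatest_of_bdd ⟨hTbdd.choose, fun z hz => hTbdd.choose_spec z hz⟩ hTne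
  refine ⟨(m : WithTop ℤ), hmT, fun w hw => ?_⟩
  lift w to ℤ using hnt w hw with z
  exact_mod_cast hmax z hw

/-- A set of values bounded on both sides, avoiding top, is finite. -/
theorem finite_of_bdd (S : Set (WithTop ℤ)) (lo hi : ℤ)
    (h : ∀ w ∈ S, (lo : WithTop ℤ) ≤ w ∧ w ≤ (hi : WithTop ℤ) ∧ w ≠ ⊤) : S.Finite := by
  apply Set.Finite.subset ((Set.finite_Icc lo hi).image (fun z : ℤ => (z : WithTop ℤ)))
  intro w hw
  obtain ⟨h1, h2, h3⟩ := h w hw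
  lift w to ℤ using h3 with z
  exact ⟨z, ⟨by exact_mod_cast h1, by exact_mod_cast h2⟩, rfl⟩

theorem fin_strictMono_bound {m : ℕ} (F : Fin (m + 1) → ℕ) (hF : StrictMono F) :
    ∀ (k : ℕ) (hk : k < m + 1), F 0 + k ≤ F ⟨k, hk⟩ := by
  intro k
  induction k with
  | zero => intro hk; simp [show (⟨0, hk⟩ : Fin (m+1)) = 0 from rfl]
  | succ k ih =>
    intro hk
    have h1 := ih (by omega)
    have h2 : F ⟨k, by omega⟩ < F ⟨k + 1, hk⟩ := hF (by simp [Fin.lt_def])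
    omega


theorem lt_add_one_of_ne_top {a : WithTop ℤ} (ha : a ≠ ⊤) : a < a + 1 := by
  lift a to ℤ using ha
  exact_mod_cast lt_add_one a

theorem add_one_le_of_lt_wt {a b : WithTop ℤ} (h : a < b) (hb : b ≠ ⊤) : a + 1 ≤ b := by
  have ha : a ≠ ⊤ := h.ne_top
  lift a to ℤ using ha
  lift b to ℤ using hb
  have : (a : ℤ) < b := by exact_mod_cast h
  exact_mod_cast by omega

theorem one_le_of_ne {a : WithTop ℤ} (h0 : 0 ≤ a) (hne : a ≠ 0) : 1 ≤ a := by
  rcases eq_or_ne a ⊤ with rfl | ha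
  · exact le_top
  · lift a to ℤ using ha
    have h0' : (0:ℤ) ≤ a := by exact_mod_cast h0
    have hne' : (a:ℤ) ≠ 0 := by exact_mod_cast hne
    exact_mod_cast by omega

/-- Residual rationality step: given elements of equal (finite) value, we can subtract
an `R`-multiple to strictly increase the value. -/
theorem res_step {R : Type*} [CommRing R] {K : Type*} [Field K] [Algebra R K]
    [IsDiscreteValuationRing (integralClosure R K)]
    (hres : ∀ y : integralClosure R K, ∃ a : R,
      y - algebraMap R (integralClosure R K) a ∈ maximalIdeal (integralClosure R K))
    (v : K → WithTop ℤ) (hv0 : ∀ y : K, v y = ⊤ ↔ y = 0)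
    (hvmul : ∀ y z : K, v (y * z) = v y + v z)
    (hvRbar : ∀ y : K, y ∈ integralClosure R K ↔ 0 ≤ v y)
    (x y : K) (hy : y ≠ 0) (hxy : v x = v y) :
    ∃ a : R, v x < v (x - a • y) := by
  have hvy : v y ≠ ⊤ := by rw [Ne, hv0]; exact hy
  set c := x / y with hc
  have hcy : c * y = x := div_mul_cancel₀ x hy
  have hvc : v c = 0 := by
    have h := hvmul c y
    rw [hcy, hxy] at h
    have h0 : v c + v y = 0 + v y := by rw [zero_add]; exact h.symm
    exact WithTop.add_right_cancel hvy h0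
  have hcR : c ∈ integralClosure R K := (hvRbar c).mpr (by rw [hvc])
  obtain ⟨a, ha⟩ := hres ⟨c, hcR⟩
  set d : K := c - algebraMap R K a with hd
  have hdR : d ∈ integralClosure R K := by
    have := ((⟨c, hcR⟩ : integralClosure R K) - algebraMap R (integralClosure R K) a).2
    convert this using 1
    rfl
  have hDcoe : ((⟨c, hcR⟩ - algebraMap R (integralClosure R K) a : integralClosure R K) : K) = d := rfl
  have hvd0 : 0 ≤ v d := (hvRbar d).mp hdR
  have hvdne : v d ≠ 0 := by
    intro h0
    have hdne : d ≠ 0 := by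
      intro h; rw [h, (hv0 0).mpr rfl] at h0; exact (by simp : (⊤ : WithTop ℤ) ≠ 0) h0
    have hvdi : v d⁻¹ = 0 := by
      have h := hvmul d d⁻¹
      rw [mul_inv_cancel₀ hdne, v_one hv0 hvmul, h0, zero_add] at h
      exact h.symm
    have hdiR : d⁻¹ ∈ integralClosure R K := (hvRbar d⁻¹).mpr (by rw [hvdi])
    have hunit : IsUnit (⟨c, hcR⟩ - algebraMap R (integralClosure R K) a : integralClosure R K) := by
      apply IsUnit.of_mul_eq_one (⟨d⁻¹, hdiR⟩ : integralClosure R K)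
      ext
      show d * d⁻¹ = 1
      exact mul_inv_cancel₀ hdne
    exact (mem_maximalIdeal _).mp ha hunit
  have hv1 : 1 ≤ v d := one_le_of_ne hvd0 hvdne
  refine ⟨a, ?_⟩
  have hxd : x - a • y = y * d := by
    rw [Algebra.smul_def, hd, hc]
    field_simp
  rw [hxd, hvmul, hxy]
  calc v y < v y + 1 := lt_add_one_of_ne_top hvy
    _ ≤ v y + v d := add_le_add_right hv1 _


end Aux


theorem vvals_mono {R : Type*} [CommRing R] {K : Type*} [CommRing K] [Algebra R K]
    (v : K → WithTop ℤ) {M N : Submodule R K} (h : M ≤ N) : vvals v M ⊆ vvals v N :=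
  Set.image_mono (fun _ hx => ⟨h hx.1, hx.2⟩)

theorem exists_new_value {R : Type*} [CommRing R] {K : Type*} [Field K] [Algebra R K]
    [IsDiscreteValuationRing (integralClosure R K)]
    (hres : ∀ y : integralClosure R K, ∃ a : R,
      y - algebraMap R (integralClosure R K) a ∈ maximalIdeal (integralClosure R K))
    (v : K → WithTop ℤ) (hv0 : ∀ y : K, v y = ⊤ ↔ y = 0)
    (hvmul : ∀ y z : K, v (y * z) = v y + v z)
    (hvRbar : ∀ y : K, y ∈ integralClosure R K ↔ 0 ≤ v y)
    (M1 M2 : Submodule R K) (hlt : M1 < M2) (hi : ℤ)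
    (hhi : ∀ x : K, (hi : WithTop ℤ) ≤ v x → x ∈ M1) :
    ∃ e, e ∈ vvals v M2 ∧ e ∉ vvals v M1 := by
  set S := v '' {x | x ∈ M2 ∧ x ∉ M1} with hSdef
  obtain ⟨x0, hx02, hx01⟩ := SetLike.exists_of_lt hlt
  have hne : S.Nonempty := ⟨v x0, x0, ⟨hx02, hx01⟩, rfl⟩
  have hnt : ∀ w ∈ S, w ≠ ⊤ := by
    rintro w ⟨x, ⟨h2, h1⟩, rfl⟩ htop
    exact h1 (by rw [(hv0 x).mp htop]; exact M1.zero_mem)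
  have hub : ∀ w ∈ S, w ≤ (hi : WithTop ℤ) := by
    rintro w ⟨x, ⟨h2, h1⟩, rfl⟩
    by_contra hcon
    exact h1 (hhi x (le_of_not_ge hcon))
  obtain ⟨m, hmS, hmax⟩ := exists_max_val S hne hi hub hnt
  obtain ⟨x, ⟨hx2, hx1⟩, rfl⟩ := hmS
  refine ⟨v x, ⟨x, ⟨hx2, fun h => hx1 (by rw [h]; exact M1.zero_mem)⟩, rfl⟩, ?_⟩
  rintro ⟨y, ⟨hy1, hy0⟩, hvy⟩
  obtain ⟨a, ha⟩ := res_step hres v hv0 hvmul hvRbar x y hy0 hvy.symm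
  have hx'2 : x - a • y ∈ M2 := sub_mem hx2 (hlt.le (M1.smul_mem a hy1))
  have hx'1 : x - a • y ∉ M1 := by
    intro h
    have := add_mem h (M1.smul_mem a hy1)
    rw [sub_add_cancel] at this
    exact hx1 this
  exact absurd (hmax _ ⟨x - a • y, ⟨hx'2, hx'1⟩, rfl⟩) (not_le.mpr ha)


theorem stmt_0
    (R : Type*) [CommRing R] [IsDomain R] [IsLocalRing R] [IsNoetherianRing R]
    (K : Type*) [Field K] [Algebra R K] [IsFractionRing R K]
    [IsDiscreteValuationRing (integralClosure R K)]
    [Module.Finite R (integralClosure R K)]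
    (hres : ∀ y : integralClosure R K, ∃ a : R,
      y - algebraMap R (integralClosure R K) a ∈ maximalIdeal (integralClosure R K))
    (hkinf : Infinite (ResidueField R))
    (v : K → WithTop ℤ) (hv0 : ∀ y : K, v y = ⊤ ↔ y = 0)
    (hvmul : ∀ y z : K, v (y * z) = v y + v z)
    (hvadd : ∀ y z : K, min (v y) (v z) ≤ v (y + z))
    (t : K) (ht : t ∈ integralClosure R K) (hvt : v t = 1)
    (hvRbar : ∀ y : K, y ∈ integralClosure R K ↔ 0 ≤ v y)
    (I J : Submodule R K) (hJI : J ≤ I) (hIfg : I.FG) (hJfg : J.FG) (hJ0 : J ≠ ⊥) :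
    qlen R I J = ((vvals v I \ vvals v J).encard : WithBot ℕ∞) := by
  classical
  have hz : v 0 = ⊤ := (hv0 0).mpr rfl
  have hvR : ∀ r : R, 0 ≤ v (algebraMap R K r) :=
    fun r => (hvRbar _).mp ((integralClosure R K).algebraMap_mem r)
  have hsm : ∀ (r : R) (x : K), v x ≤ v (r • x) := by
    intro r x
    rw [Algebra.smul_def, hvmul]
    exact le_add_of_nonneg_left (hvR r)
  set V : WithTop ℤ → Submodule R K := Vge v hz hvadd hsm with hVdef
  -- nonzero element of J
  obtain ⟨j, hjJ, hj0⟩ := Submodule.exists_mem_ne_zero_of_ne_bot hJ0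
  have hvjne : v j ≠ ⊤ := by rw [Ne, hv0]; exact hj0
  -- lower bound for values on I
  obtain ⟨lo, hlo⟩ : ∃ lo : ℤ, ∀ x ∈ I, (lo : WithTop ℤ) ≤ v x := by
    obtain ⟨s, hs⟩ := hIfg
    have hIV : ∀ x ∈ I, s.inf v ≤ v x := by
      intro x hx
      rw [← hs] at hx
      refine Submodule.span_induction ?_ ?_ ?_ ?_ hx
      · intro y hy; exact Finset.inf_le hy
      · rw [hz]; exact le_top
      · intro y z _ _ hy hz2; exact le_trans (le_min hy hz2) (hvadd y z)
      · intro r y _ hy; exact le_trans hy (hsm r y)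
    have hne : s.inf v ≠ ⊤ := ne_top_of_le_ne_top hvjne (hIV j (hJI hjJ))
    obtain ⟨lo, hlo'⟩ := WithTop.ne_top_iff_exists.mp hne
    exact ⟨lo, fun x hx => hlo' ▸ hIV x hx⟩
  -- conductor-type upper bound
  obtain ⟨s0, hcond⟩ : ∃ s0 : ℤ, ∀ x : K, (s0 : WithTop ℤ) ≤ v x → x ∈ J := by
    have hfg : (Subalgebra.toSubmodule (integralClosure R K)).FG :=
      Module.Finite.iff_fg.mp (by exact ‹Module.Finite R ↥(integralClosure R K)›)
    obtain ⟨g, hg⟩ := hfg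
    obtain ⟨bb, hbb⟩ := IsLocalization.exist_integer_multiples_of_finset (nonZeroDivisors R) g
    set r : R := (bb : R) with hrdef
    have hr0 : algebraMap R K r ≠ 0 :=
      IsFractionRing.to_map_ne_zero_of_mem_nonZeroDivisors bb.2
    have hT : ∀ y ∈ integralClosure R K, ∃ r' : R,
        algebraMap R K r' = algebraMap R K r * y := by
      intro y hy
      have hy' : y ∈ Subalgebra.toSubmodule (integralClosure R K) := hy
      rw [← hg] at hy'
      refine Submodule.span_induction ?_ ?_ ?_ ?_ hy'
      · intro z hzg
        obtain ⟨r', hr'⟩ := hbb z hzg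
        refine ⟨r', ?_⟩
        rw [hr', Algebra.smul_def]
      · exact ⟨0, by simp⟩
      · rintro y1 y2 _ _ ⟨r1, h1⟩ ⟨r2, h2⟩
        exact ⟨r1 + r2, by rw [map_add, h1, h2]; ring⟩
      · rintro c y1 _ ⟨r1, h1⟩
        refine ⟨c * r1, ?_⟩
        rw [map_mul, h1, Algebra.smul_def]; ring
    have hvrne : v (algebraMap R K r) ≠ ⊤ := by rw [Ne, hv0]; exact hr0
    obtain ⟨zr, hzr⟩ := WithTop.ne_top_iff_exists.mp hvrne
    obtain ⟨zj, hzj⟩ := WithTop.ne_top_iff_exists.mp hvjne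
    refine ⟨zj + zr, ?_⟩
    intro x hx
    rcases eq_or_ne x 0 with rfl | hx0
    · exact J.zero_mem
    · set cq := x / j with hcq
      have hcqj : cq * j = x := div_mul_cancel₀ x hj0
      have hvcq : (zr : WithTop ℤ) ≤ v cq := by
        have h1 : v cq + v j = v x := by rw [← hvmul, hcqj]
        have h2 : (zr : WithTop ℤ) + (zj : WithTop ℤ) ≤ v cq + (zj : WithTop ℤ) := by
          calc (zr : WithTop ℤ) + (zj : WithTop ℤ) = ((zj + zr : ℤ) : WithTop ℤ) := by
                push_cast; exact add_comm _ _
            _ ≤ v x := hx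
            _ = v cq + (zj : WithTop ℤ) := by rw [← h1, hzj]
        exact (WithTop.add_le_add_iff_right (by simp)).mp h2
      set dq := cq / algebraMap R K r with hdq
      have hdqr : dq * algebraMap R K r = cq := div_mul_cancel₀ cq hr0
      have hvdq : (0 : WithTop ℤ) ≤ v dq := by
        have h1 : v dq + (zr : WithTop ℤ) = v cq := by rw [hzr, ← hvmul, hdqr]
        have h2 : (0 : WithTop ℤ) + (zr : WithTop ℤ) ≤ v dq + (zr : WithTop ℤ) := by
          rw [zero_add, h1]; exact hvcq
        exact (WithTop.add_le_add_iff_right (by simp)).mp h2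
      obtain ⟨r', hr'⟩ := hT dq ((hvRbar dq).mpr hvdq)
      have hcq' : algebraMap R K r' = cq := by
        rw [hr', hdq, mul_div_cancel₀ _ hr0]
      have hxr : x = r' • j := by
        rw [Algebra.smul_def, hcq', hcqj]
      rw [hxr]
      exact J.smul_mem r' hjJ
  set D := vvals v I \ vvals v J with hDdef
  have hDlow : ∀ w ∈ D, (lo : WithTop ℤ) ≤ w ∧ w ≤ (s0 : WithTop ℤ) ∧ w ≠ ⊤ := by
    rintro w ⟨⟨x, ⟨hxI, hx0⟩, rfl⟩, hnJ⟩
    have hne : v x ≠ ⊤ := by rw [Ne, hv0]; exact hx0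
    refine ⟨hlo x hxI, ?_, hne⟩
    by_contra hcon
    exact hnJ ⟨x, ⟨hcond x (le_of_not_ge hcon), hx0⟩, rfl⟩
  have hD : D.Finite := finite_of_bdd D lo s0 hDlow
  set n := D.ncard with hn
  -- the quotient module and the lattice maps
  set J' : Submodule R ↥I := J.comap I.subtype with hJ'def
  have hJ'ker : ∀ N : Submodule R (↥I ⧸ J'), J' ≤ N.comap J'.mkQ := by
    intro N x hx
    have hx0 : J'.mkQ x = 0 := (Submodule.Quotient.mk_eq_zero J').mpr hx
    rw [Submodule.mem_comap, hx0]
    exact N.zero_mem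
  set lft : Submodule R (↥I ⧸ J') → Submodule R K :=
    fun N => (N.comap J'.mkQ).map I.subtype with hlft
  have hlift_leI : ∀ N, lft N ≤ I := fun N => Submodule.map_subtype_le _ _
  have hmapJ' : J'.map I.subtype = J := by
    rw [hJ'def, Submodule.map_comap_subtype, inf_eq_right.mpr hJI]
  have hlift_geJ : ∀ N, J ≤ lft N := by
    intro N
    rw [← hmapJ']
    exact Submodule.map_mono (hJ'ker N)
  have hlift_strict : StrictMono lft := by
    have hinj : Function.Injective lft :=
      (Submodule.map_injective_of_injective (Submodule.injective_subtype I)).comp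
        (Submodule.comap_injective_of_surjective (Submodule.mkQ_surjective J'))
    exact Monotone.strictMono_of_injective
      (fun a b hab => Submodule.map_mono (Submodule.comap_mono hab)) hinj
  -- upper bound on chain lengths
  have hub : ∀ p : LTSeries (Submodule R (↥I ⧸ J')), p.length ≤ n := by
    intro p
    set F : Fin (p.length + 1) → ℕ := fun i => (vvals v (lft (p i)) \ vvals v J).ncard with hF
    have hsubD : ∀ i, vvals v (lft (p i)) \ vvals v J ⊆ D :=
      fun i => Set.diff_subset_diff_left (vvals_mono v (hlift_leI _))
    have hFmono : StrictMono F := by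
      intro i jx hij
      have hlt : lft (p i) < lft (p jx) := hlift_strict (p.strictMono hij)
      obtain ⟨e, he2, he1⟩ := exists_new_value hres v hv0 hvmul hvRbar _ _ hlt s0
        (fun x hx => hlift_geJ _ (hcond x hx))
      refine Set.ncard_lt_ncard ?_ (hD.subset (hsubD jx))
      refine ⟨Set.diff_subset_diff_left (vvals_mono v hlt.le), ?_⟩
      intro hsub
      have heJ : e ∉ vvals v J := fun h => he1 (vvals_mono v (hlift_geJ _) h)
      exact he1 (hsub ⟨he2, heJ⟩).1
    have h1 := fin_strictMono_bound F hFmono p.length (lt_add_one _)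
    have h2 : F ⟨p.length, lt_add_one _⟩ ≤ n := Set.ncard_le_ncard (hsubD _) hD
    omega
  -- the filtration M c = J ⊔ (I ⊓ V c)
  set Mc : WithTop ℤ → Submodule R K := fun c => J ⊔ (I ⊓ V c) with hMc
  have hMle : ∀ c, J ≤ Mc c ∧ Mc c ≤ I := fun c => ⟨le_sup_left, sup_le hJI inf_le_left⟩
  have hMmono : ∀ {c c' : WithTop ℤ}, c ≤ c' → Mc c' ≤ Mc c := by
    intro c c' h
    exact sup_le_sup_left (inf_le_inf_left _ (fun x hx => le_trans h hx)) _
  have hstep : ∀ e ∈ D, ∀ c c' : WithTop ℤ, c ≤ e → e + 1 ≤ c' → Mc c' < Mc c := by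
    rintro e ⟨⟨x, ⟨hxI, hx0⟩, hvx⟩, henJ⟩ c c' hce hec'
    have hetop : e ≠ ⊤ := by rw [← hvx, Ne, hv0]; exact hx0
    have hlee : e ≤ c' := le_trans (le_of_lt (lt_add_one_of_ne_top hetop)) hec'
    have hle : Mc c' ≤ Mc c := hMmono (le_trans hce hlee)
    have hxmc : x ∈ Mc c :=
      Submodule.mem_sup_right (Submodule.mem_inf.mpr
        ⟨hxI, mem_Vge.mpr (by rw [hvx]; exact hce)⟩)
    have hxnot : x ∉ Mc c' := by
      intro hxin
      rw [hMc, Submodule.mem_sup] at hxin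
      obtain ⟨jj, hjj, z, hzmem, hsum⟩ := hxin
      have hz2 : c' ≤ v z := (Submodule.mem_inf.mp hzmem).2
      have hvz : e + 1 ≤ v z := le_trans hec' hz2
      have hlt1 : e < v z := lt_of_lt_of_le (lt_add_one_of_ne_top hetop) hvz
      have hvnz : v (-z) = v z := v_neg hv0 hvmul z
      have hjx : jj = x + -z := by rw [← hsum]; ring
      have hgej : e ≤ v jj := by
        rw [hjx]
        refine le_trans (le_min ?_ ?_) (hvadd x (-z))
        · rw [hvx]
        · rw [hvnz]; exact hlt1.le
      have hlej : v jj ≤ e := by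
        by_contra hcon
        have h3 : e < min (v jj) (v z) := lt_min (not_le.mp hcon) hlt1
        have h4 := hvadd jj z
        rw [hsum, hvx] at h4
        exact absurd (lt_of_lt_of_le h3 h4) (lt_irrefl e)
      have hvj : v jj = e := le_antisymm hlej hgej
      have hjj0 : jj ≠ 0 := by
        intro h
        rw [h, hz] at hvj
        exact hetop hvj.symm
      exact henJ ⟨jj, ⟨hjj, hjj0⟩, hvj⟩
    exact lt_of_le_of_ne hle (fun hEq => hxnot (by rw [hEq]; exact hxmc))
  -- krullDim = n
  have hdim : Order.krullDim (Submodule R (↥I ⧸ J')) = (n : WithBot ℕ∞) := by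
    have hle1 : Order.krullDim (Submodule R (↥I ⧸ J')) ≤ (n : WithBot ℕ∞) := by
      rw [Order.krullDim_eq_iSup_length]
      have hsup : (⨆ (p : LTSeries (Submodule R (↥I ⧸ J'))), (p.length : ℕ∞)) ≤ (n : ℕ∞) :=
        iSup_le fun p => by exact_mod_cast hub p
      exact_mod_cast hsup
    refine le_antisymm hle1 ?_
    rcases Nat.eq_zero_or_pos n with h0 | hpos
    · rw [h0]
      exact_mod_cast Order.krullDim_nonneg
    · have hcard : hD.toFinset.card = n := by rw [hn, Set.ncard_eq_toFinset_card D hD]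
      set b := hD.toFinset.orderIsoOfFin hcard with hb
      set eD : Fin n → WithTop ℤ := fun k => ((b k : WithTop ℤ)) with heD
      have heDmem : ∀ k, eD k ∈ D := fun k => hD.mem_toFinset.mp (b k).2
      have heDtop : ∀ k, eD k ≠ ⊤ := fun k => (hDlow _ (heDmem k)).2.2
      have heDlt : ∀ {k l : Fin n}, k < l → eD k < eD l := by
        intro k l h
        exact_mod_cast b.strictMono h
      set T : Fin (n + 1) → WithTop ℤ := fun k =>
        if h : (k : ℕ) < n then eD ⟨n - 1 - k, by omega⟩ + 1 else eD ⟨0, hpos⟩ with hT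
      set g : Fin (n + 1) → Submodule R (↥I ⧸ J') :=
        fun k => ((Mc (T k)).comap I.subtype).map J'.mkQ with hgchain
      have hrecon : ∀ M : Submodule R K, J ≤ M → M ≤ I →
          lft (((M.comap I.subtype)).map J'.mkQ) = M := by
        intro M hJM hMI
        show ((((M.comap I.subtype)).map J'.mkQ).comap J'.mkQ).map I.subtype = M
        rw [Submodule.comap_map_mkQ, sup_eq_right.mpr (Submodule.comap_mono hJM),
          Submodule.map_comap_subtype, inf_eq_right.mpr hMI]
      have hNstrict : ∀ M1 M2 : Submodule R K, J ≤ M1 → M2 ≤ I → M1 < M2 →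
          ((M1.comap I.subtype)).map J'.mkQ < ((M2.comap I.subtype)).map J'.mkQ := by
        intro M1 M2 hJM1 hM2I hlt
        have hle' : ((M1.comap I.subtype)).map J'.mkQ ≤ ((M2.comap I.subtype)).map J'.mkQ :=
          Submodule.map_mono (Submodule.comap_mono hlt.le)
        refine lt_of_le_of_ne hle' ?_
        intro hEq
        have h1 := hrecon M1 hJM1 (le_trans hlt.le hM2I)
        have h2 := hrecon M2 (le_trans hJM1 hlt.le) hM2I
        have : M1 = M2 := by rw [← h1, ← h2, hEq]
        exact hlt.ne this
      have hgstep : ∀ k : Fin n, g (Fin.castSucc k) < g k.succ := by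
        intro k
        set e := eD ⟨n - 1 - (k : ℕ), by omega⟩ with he
        have heT : T (Fin.castSucc k) = e + 1 := by
          rw [hT]
          exact dif_pos k.2
        have hTs : T k.succ ≤ e := by
          by_cases hcase : ((k : ℕ) + 1) < n
          · have hTeq : T k.succ = eD ⟨n - 1 - ((k : ℕ) + 1), by omega⟩ + 1 := by
              rw [hT]
              exact dif_pos (by simpa using hcase)
            rw [hTeq]
            refine add_one_le_of_lt_wt (heDlt ?_) (heDtop _)
            simp only [Fin.lt_def]
            omega
          · have hTeq : T k.succ = eD ⟨0, hpos⟩ := by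
              rw [hT]
              exact dif_neg (by simp; omega)
            rw [hTeq, he]
            have hidx : (⟨n - 1 - (k : ℕ), by omega⟩ : Fin n) = ⟨0, hpos⟩ := by
              apply Fin.ext
              simp only
              omega
            rw [hidx]
        have hMlt : Mc (T (Fin.castSucc k)) < Mc (T k.succ) := by
          rw [heT]
          exact hstep e (heDmem _) _ _ hTs le_rfl
        exact hNstrict _ _ (hMle _).1 (hMle _).2 hMlt
      have hfin : ∀ i : Fin n, (fun (i : Fin (n+1)) => g i) (Fin.castSucc i) <
          (fun (i : Fin (n+1)) => g i) i.succ := hgstep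
      let pC : LTSeries (Submodule R (↥I ⧸ J')) := ⟨n, g, hgstep⟩
      have hlen := Order.LTSeries.length_le_krullDim pC
      exact_mod_cast hlen
  show qlen R I J = _
  rw [qlen, modLength, hdim, hn, Set.ncard_eq_toFinset_card D hD,
    hD.encard_eq_coe_toFinset_card]
  rfl
end
end

section
/- With ν the reduction exponent of I (the least n with I^{n+1} = xI^n for all subsequent powers), one has I^ν ⊆ R : Λ, and if R : Λ = I^n for some n, then n = ν. -/
open Submodule IsLocalRing

noncomputable section

section Aux
variable {R : Type*} [CommRing R] {K : Type*} [CommRing K] [Algebra R K]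

lemma idl_mul (I J : Ideal R) : idl R K (I * J) = idl R K I * idl R K J :=
  Submodule.map_mul I J (Algebra.ofId R K)

lemma idl_pow (I : Ideal R) (n : ℕ) : idl R K (I ^ n) = idl R K I ^ n :=
  Submodule.map_pow I (Algebra.ofId R K) n

lemma idl_le_one (I : Ideal R) : idl R K I ≤ 1 := by
  rw [Submodule.one_eq_range]
  rintro y hy
  obtain ⟨a, -, rfl⟩ := Submodule.mem_map.mp hy
  exact ⟨a, rfl⟩

lemma idl_span_mul (y : R) (J : Ideal R) :
    idl R K (Ideal.span {y} * J) = Submodule.span R {algebraMap R K y} * idl R K J := by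
  rw [idl_mul]
  congr 1
  show Submodule.map (Algebra.linearMap R K) (Submodule.span R {y}) = _
  rw [Submodule.map_span, Set.image_singleton, Algebra.linearMap_apply]
end Aux

theorem stmt_2
    (R : Type*) [CommRing R] [IsDomain R] [IsLocalRing R] [IsNoetherianRing R]
    (K : Type*) [Field K] [Algebra R K] [IsFractionRing R K]
    [IsDiscreteValuationRing (integralClosure R K)]
    [Module.Finite R (integralClosure R K)]
    (hres : ∀ y : integralClosure R K, ∃ a : R,
      y - algebraMap R (integralClosure R K) a ∈ maximalIdeal (integralClosure R K))
    (hkinf : Infinite (ResidueField R))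
    (I : Ideal R) (hI0 : I ≠ ⊥) (hIrad : I.radical = maximalIdeal R)
    (hInp : ¬ I.IsPrincipal)
    (x : R) (hxI : x ∈ I)
    (ν : ℕ) (hν : IsLeast {n : ℕ | ∀ k ≥ n, I ^ (k + 1) = Ideal.span {x} * I ^ k} ν) :
    (idl R K I) ^ ν ≤ (1 : Submodule R K) / (blowup R K I) ∧
      ∀ m : ℕ, (1 : Submodule R K) / (blowup R K I) = (idl R K I) ^ m → m = ν := by

  have hf : Function.Injective (algebraMap R K) := IsFractionRing.injective R K
  set f : R → K := ⇑(algebraMap R K) with hfdef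
  have hItop : I ≠ ⊤ := by rintro rfl; exact hInp ⟨1, by simp⟩
  have hpow0 : ∀ n : ℕ, I ^ n ≠ ⊥ := by
    intro n hn
    obtain ⟨y, hy, hy0⟩ := Submodule.exists_mem_ne_zero_of_ne_bot hI0
    exact pow_ne_zero n hy0 (by
      have : y ^ n ∈ I ^ n := Ideal.pow_mem_pow hy n
      rw [hn] at this
      exact this)
  have hx0 : x ≠ 0 := by
    rintro rfl
    have h1 := hν.1 ν le_rfl
    rw [Ideal.span_singleton_eq_bot.mpr rfl, bot_mul] at h1
    exact hpow0 (ν + 1) h1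
  have hxν : f x ≠ 0 := fun h => hx0 (hf (by simpa [hfdef] using h))
  -- power formula
  have powerEq : ∀ j : ℕ, I ^ (ν + j) = Ideal.span {x} ^ j * I ^ ν := by
    intro j
    induction j with
    | zero => simp
    | succ j ih =>
      have h1 := hν.1 (ν + j) (Nat.le_add_right _ _)
      have h2 : ν + (j + 1) = (ν + j) + 1 := rfl
      rw [h2, h1, ih]
      ring
  have hscaled : ∀ j : ℕ, idl R K (I ^ (ν + j)) =
      Submodule.span R {f x ^ j} * idl R K (I ^ ν) := by
    intro j
    rw [powerEq j, Ideal.span_singleton_pow, idl_span_mul, map_pow]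
  -- closure of the stabilizer under multiplication
  have hLmul : ∀ z w : K, z ∈ idl R K (I ^ ν) / idl R K (I ^ ν) →
      w ∈ idl R K (I ^ ν) / idl R K (I ^ ν) →
      z * w ∈ idl R K (I ^ ν) / idl R K (I ^ ν) := by
    intro z w hz hw
    rw [Submodule.mem_div_iff_forall_mul_mem] at hz hw ⊢
    intro y hy
    rw [mul_assoc]
    exact hz _ (hw y hy)
  -- monotonicity upward
  have hmono : ∀ a b : ℕ, a ≤ b →
      idl R K (I ^ a) / idl R K (I ^ a) ≤ idl R K (I ^ b) / idl R K (I ^ b) := by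
    intro a b hab z hz
    rw [Submodule.mem_div_iff_forall_mul_mem] at hz ⊢
    have hb : idl R K (I ^ b) = idl R K (I ^ a) * idl R K (I ^ (b - a)) := by
      rw [← idl_mul, ← pow_add, Nat.add_sub_cancel' hab]
    intro y hy
    rw [hb] at hy ⊢
    refine Submodule.mul_induction_on hy (fun p hp q hq => ?_) (fun p q hp hq => ?_)
    · rw [← mul_assoc]; exact Submodule.mul_mem_mul (hz p hp) hq
    · rw [mul_add]; exact add_mem hp hq
  -- monotonicity downward to ν
  have hdown : ∀ j : ℕ,
      idl R K (I ^ (ν + j)) / idl R K (I ^ (ν + j)) ≤ idl R K (I ^ ν) / idl R K (I ^ ν) := by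
    intro j z hz
    rw [Submodule.mem_div_iff_forall_mul_mem] at hz ⊢
    intro y hy
    have h1 : f x ^ j * y ∈ idl R K (I ^ (ν + j)) := by
      rw [hscaled j]
      exact Submodule.mul_mem_mul (Submodule.mem_span_singleton_self _) hy
    have h2 := hz _ h1
    rw [hscaled j, Submodule.mem_span_singleton_mul] at h2
    obtain ⟨w, hw, hww⟩ := h2
    have hcx : f x ^ j ≠ 0 := pow_ne_zero _ hxν
    have h3 : w = z * y := mul_left_cancel₀ hcx (by rw [hww]; ring)
    rw [← h3]; exact hw
  have hblow : blowup R K I = idl R K (I ^ ν) / idl R K (I ^ ν) := by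
    have hb2 : blowup R K I = ⨆ n : ℕ, idl R K (I ^ n) / idl R K (I ^ n) := by
      unfold blowup
      simp_rw [idl_pow]
    rw [hb2]
    apply le_antisymm
    · apply iSup_le
      intro n
      rcases le_or_gt n ν with h | h
      · exact hmono n ν h
      · have h2 := hdown (n - ν)
        rwa [Nat.add_sub_cancel' h.le] at h2
    · exact le_iSup (fun n => idl R K (I ^ n) / idl R K (I ^ n)) ν
  have part1 : (idl R K I) ^ ν ≤ (1 : Submodule R K) / (blowup R K I) := by
    rw [hblow, ← idl_pow, Submodule.le_div_iff_mul_le]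
    refine le_trans ?_ (idl_le_one (I ^ ν))
    rw [mul_comm]
    exact Submodule.le_div_iff_mul_le.mp le_rfl
  refine ⟨part1, ?_⟩
  intro m hm
  rw [hblow, ← idl_pow] at hm
  -- injectivity transfer
  have hinj : ∀ J J' : Ideal R, idl R K J ≤ idl R K J' → J ≤ J' := by
    intro J J' h a ha
    have h1 : (Algebra.linearMap R K) a ∈ idl R K J' := h (Submodule.mem_map_of_mem ha)
    obtain ⟨b, hb, hba⟩ := Submodule.mem_map.mp h1
    exact hf hba ▸ hb
  have hνm : I ^ ν ≤ I ^ m := by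
    refine hinj _ _ ?_
    rw [← hm, ← hblow, idl_pow]
    exact part1
  have hmle : m ≤ ν := by
    by_contra hc
    push_neg at hc
    have h2 : I ^ ν ≤ (maximalIdeal R) • (I ^ ν) := by
      calc I ^ ν ≤ I ^ m := hνm
        _ ≤ I ^ (ν + 1) := Ideal.pow_le_pow_right hc
        _ = I * I ^ ν := pow_succ' I ν
        _ ≤ maximalIdeal R * I ^ ν := Ideal.mul_mono_left (le_maximalIdeal hItop)
        _ = (maximalIdeal R) • (I ^ ν) := (Ideal.smul_eq_mul _ _).symm
    have h3 := Submodule.eq_bot_of_le_smul_of_le_jacobson_bot (maximalIdeal R) (I ^ ν)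
      (IsNoetherian.noetherian _) h2 (jacobson_eq_maximalIdeal ⊥ bot_ne_top).ge
    exact hpow0 ν h3
  by_contra hne
  have hlt : m < ν := lt_of_le_of_ne hmle (Ne.symm (hne ∘ Eq.symm))
  have hxm : f x ^ m ∈ idl R K (I ^ m) := by
    have : (Algebra.linearMap R K) (x ^ m) ∈ idl R K (I ^ m) :=
      Submodule.mem_map_of_mem (Ideal.pow_mem_pow hxI m)
    simpa [map_pow] using this
  have hkey : I ^ ν ≤ Ideal.span {x ^ (ν - m)} * I ^ m := by
    intro a ha
    have hfa : f a ∈ idl R K (I ^ ν) := Submodule.mem_map_of_mem ha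
    have hz : (f x)⁻¹ ^ ν * f a ∈ idl R K (I ^ ν) / idl R K (I ^ ν) := by
      rw [Submodule.mem_div_iff_forall_mul_mem]
      intro y hy
      have h1 : f a * y ∈ idl R K (I ^ (ν + ν)) := by
        rw [pow_add, idl_mul]
        exact Submodule.mul_mem_mul hfa hy
      rw [hscaled ν, Submodule.mem_span_singleton_mul] at h1
      obtain ⟨w, hw, hww⟩ := h1
      have h4 : (f x)⁻¹ ^ ν * f a * y = w := by
        rw [mul_assoc, ← hww, ← mul_assoc, ← mul_pow, inv_mul_cancel₀ hxν, one_pow, one_mul]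
      rwa [h4]
    have hw2 : (f x)⁻¹ ^ (ν - m) * f a ∈ idl R K (I ^ m) := by
      rw [← hm, Submodule.mem_div_iff_forall_mul_mem]
      intro u hu
      have h3 : f x ^ m ∈ (1 : Submodule R K) / (idl R K (I ^ ν) / idl R K (I ^ ν)) :=
        hm ▸ hxm
      rw [Submodule.mem_div_iff_forall_mul_mem] at h3
      have h4 := h3 _ (hLmul _ _ hz hu)
      have hone : f x ^ m * (f x)⁻¹ ^ m = 1 := by
        rw [← mul_pow, mul_inv_cancel₀ hxν, one_pow]
      have hsplit : (f x)⁻¹ ^ ν = (f x)⁻¹ ^ m * (f x)⁻¹ ^ (ν - m) := by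
        rw [← pow_add, Nat.add_sub_cancel' hmle]
      have heq : (f x)⁻¹ ^ (ν - m) * f a * u = f x ^ m * ((f x)⁻¹ ^ ν * f a * u) := by
        rw [hsplit]
        calc (f x)⁻¹ ^ (ν - m) * f a * u
            = (f x ^ m * (f x)⁻¹ ^ m) * ((f x)⁻¹ ^ (ν - m) * f a * u) := by
              rw [hone, one_mul]
          _ = f x ^ m * ((f x)⁻¹ ^ m * (f x)⁻¹ ^ (ν - m) * f a * u) := by ring
      rw [heq]
      exact h4
    have h5 : f a ∈ idl R K (Ideal.span {x ^ (ν - m)} * I ^ m) := by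
      rw [idl_span_mul, Submodule.mem_span_singleton_mul]
      refine ⟨(f x)⁻¹ ^ (ν - m) * f a, hw2, ?_⟩
      rw [map_pow, ← mul_assoc, ← mul_pow, mul_inv_cancel₀ hxν, one_pow, one_mul]
    obtain ⟨b, hb, hba⟩ := Submodule.mem_map.mp h5
    exact hf hba ▸ hb
  have hxle : Ideal.span {x} ≤ I := (Ideal.span_singleton_le_iff_mem I).mpr hxI
  have hfin : I ^ ν = Ideal.span {x} * I ^ (ν - 1) := by
    apply le_antisymm
    · calc I ^ ν ≤ Ideal.span {x ^ (ν - m)} * I ^ m := hkey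
        _ = Ideal.span {x} ^ (ν - m) * I ^ m := by rw [Ideal.span_singleton_pow]
        _ = Ideal.span {x} * (Ideal.span {x} ^ (ν - m - 1) * I ^ m) := by
            rw [← mul_assoc, ← pow_succ', show ν - m - 1 + 1 = ν - m by omega]
        _ ≤ Ideal.span {x} * (I ^ (ν - m - 1) * I ^ m) :=
            Ideal.mul_mono_right (Ideal.mul_mono_left (Ideal.pow_right_mono hxle _))
        _ = Ideal.span {x} * I ^ (ν - 1) := by
            rw [← pow_add, show ν - m - 1 + m = ν - 1 by omega]
    · calc Ideal.span {x} * I ^ (ν - 1) ≤ I * I ^ (ν - 1) := Ideal.mul_mono_left hxle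
        _ = I ^ (ν - 1 + 1) := (pow_succ' I (ν - 1)).symm
        _ = I ^ ν := by rw [show ν - 1 + 1 = ν by omega]
  have hν1 : ν ≤ ν - 1 := by
    apply hν.2
    intro k hk
    rcases eq_or_lt_of_le hk with rfl | h
    · rw [show ν - 1 + 1 = ν by omega, hfin]
    · exact hν.1 k (by omega)
  omega
end
end

section
/- If R:Λ = I^ν, then Λ is reflexive, i.e. Λ = R:(R:Λ). -/
open Submodule IsLocalRing

noncomputable section

theorem stmt_6
    (R : Type*) [CommRing R] [IsDomain R] [IsLocalRing R] [IsNoetherianRing R]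
    (K : Type*) [Field K] [Algebra R K] [IsFractionRing R K]
    [IsDiscreteValuationRing (integralClosure R K)]
    [Module.Finite R (integralClosure R K)]
    (hres : ∀ y : integralClosure R K, ∃ a : R,
      y - algebraMap R (integralClosure R K) a ∈ maximalIdeal (integralClosure R K))
    (hkinf : Infinite (ResidueField R))
    (I : Ideal R) (hI0 : I ≠ ⊥) (hIrad : I.radical = maximalIdeal R)
    (hInp : ¬ I.IsPrincipal)
    (x : R) (hxI : x ∈ I)
    (ν : ℕ) (hν : IsLeast {n : ℕ | ∀ k ≥ n, I ^ (k + 1) = Ideal.span {x} * I ^ k} ν)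
    (hcond : (1 : Submodule R K) / (blowup R K I) = (idl R K I) ^ ν) :
    (blowup R K I) = (1 : Submodule R K) / ((1 : Submodule R K) / (blowup R K I)) := by
  classical
  have hfinj : Function.Injective (algebraMap R K) := IsFractionRing.injective R K
  set f := algebraMap R K with hf
  -- x is nonzero
  have hx0 : x ≠ 0 := by
    rintro rfl
    obtain ⟨a, haI, ha0⟩ := Submodule.exists_mem_ne_zero_of_ne_bot hI0
    have h1 := hν.1 ν le_rfl
    rw [Ideal.span_singleton_eq_bot.mpr rfl, bot_mul] at h1
    have : a ^ (ν + 1) ∈ (⊥ : Ideal R) := h1 ▸ Ideal.pow_mem_pow haI (ν + 1)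
    exact ha0 (pow_eq_zero_iff (Nat.succ_ne_zero ν) |>.1 (Ideal.mem_bot.1 this))
  have hcν0 : f (x ^ ν) ≠ 0 := fun h => pow_ne_zero ν hx0 (hfinj (by rw [h, map_zero]))
  -- powers of idl
  have hJpow : ∀ n : ℕ, (idl R K I) ^ n
      = Submodule.map (Algebra.linearMap R K) (I ^ n) := by
    intro n
    have h0 : Algebra.linearMap R K = (Algebra.ofId R K).toLinearMap := rfl
    rw [idl, h0, ← Submodule.map_pow]
  have hmem : ∀ (n : ℕ) (w : K), w ∈ (idl R K I) ^ n ↔ ∃ y ∈ I ^ n, f y = w := by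
    intro n w
    rw [hJpow n]
    simp [Submodule.mem_map, hf]
  have hcνmem : f (x ^ ν) ∈ (idl R K I) ^ ν :=
    (hmem ν _).2 ⟨x ^ ν, Ideal.pow_mem_pow hxI ν, rfl⟩
  -- monotonicity of the family n ↦ Jⁿ/Jⁿ
  have hmono : Monotone (fun n : ℕ => ((idl R K I) ^ n) / ((idl R K I) ^ n)) := by
    apply monotone_nat_of_le_succ
    intro n z hz
    rw [Submodule.mem_div_iff_forall_mul_mem] at hz ⊢
    intro w hw
    rw [pow_succ] at hw ⊢
    refine Submodule.mul_induction_on hw ?_ ?_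
    · intro a ha b hb
      rw [← mul_assoc]
      exact Submodule.mul_mem_mul (hz a ha) hb
    · intro a b ha hb
      rw [mul_add]
      exact add_mem ha hb
  have hblow : ∀ z : K, z ∈ blowup R K I ↔
      ∃ n : ℕ, z ∈ ((idl R K I) ^ n) / ((idl R K I) ^ n) := by
    intro z
    exact Submodule.mem_iSup_of_directed _ hmono.directed_le
  -- stable powers
  have hIpow : ∀ j : ℕ, I ^ (ν + j) = Ideal.span {x} ^ j * I ^ ν := by
    intro j
    induction j with
    | zero => simp
    | succ j ih =>
      have h1 := hν.1 (ν + j) (Nat.le_add_right _ _)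
      calc I ^ (ν + (j + 1)) = I ^ (ν + j + 1) := by ring_nf
        _ = Ideal.span {x} * I ^ (ν + j) := h1
        _ = Ideal.span {x} * (Ideal.span {x} ^ j * I ^ ν) := by rw [ih]
        _ = Ideal.span {x} ^ (j + 1) * I ^ ν := by ring
  -- factorization: J^ν ⊆ cν • Λ
  have hfac : ∀ w ∈ (idl R K I) ^ ν, ∃ u ∈ blowup R K I, w = f (x ^ ν) * u := by
    intro w hw
    obtain ⟨y, hy, rfl⟩ := (hmem ν w).1 hw
    refine ⟨f y * (f (x ^ ν))⁻¹, ?_, ?_⟩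
    · rw [hblow]
      refine ⟨ν, ?_⟩
      rw [Submodule.mem_div_iff_forall_mul_mem]
      intro w' hw'
      obtain ⟨y', hy', rfl⟩ := (hmem ν w').1 hw'
      have hyy : y * y' ∈ Ideal.span {x ^ ν} * I ^ ν := by
        rw [← Ideal.span_singleton_pow, ← hIpow ν, pow_add]
        exact Ideal.mul_mem_mul hy hy'
      obtain ⟨t, ht, hxt⟩ := Ideal.mem_span_singleton_mul.1 hyy
      have h' : f (y * y') = f (x ^ ν) * f t := by rw [← map_mul, ← hxt]
      have heq : f y * (f (x ^ ν))⁻¹ * f y' = f t := by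
        calc f y * (f (x ^ ν))⁻¹ * f y' = f (y * y') * (f (x ^ ν))⁻¹ := by rw [map_mul]; ring
          _ = f (x ^ ν) * f t * (f (x ^ ν))⁻¹ := by rw [h']
          _ = f t := by
              rw [mul_comm (f (x ^ ν)) (f t), mul_assoc, mul_inv_cancel₀ hcν0, mul_one]
      rw [heq]
      exact (hmem ν _).2 ⟨t, ht, rfl⟩
    · rw [mul_comm (f (x ^ ν)), mul_assoc, inv_mul_cancel₀ hcν0, mul_one]
  -- cν • Λ ⊆ J^ν
  have hL : ∀ u ∈ blowup R K I, u * f (x ^ ν) ∈ (idl R K I) ^ ν := by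
    intro u hu
    obtain ⟨n, hn⟩ := (hblow u).1 hu
    have hn' := hmono (Nat.le_add_left n ν) hn
    rw [Submodule.mem_div_iff_forall_mul_mem] at hn'
    have hxmem : f (x ^ (ν + n)) ∈ (idl R K I) ^ (ν + n) :=
      (hmem _ _).2 ⟨x ^ (ν + n), Ideal.pow_mem_pow hxI _, rfl⟩
    have h1 := hn' _ hxmem
    obtain ⟨s, hs, hfs⟩ := (hmem _ _).1 h1
    rw [hIpow n, Ideal.span_singleton_pow] at hs
    obtain ⟨t, ht, hxt⟩ := Ideal.mem_span_singleton_mul.1 hs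
    have hxn : f (x ^ n) ≠ 0 := fun h => pow_ne_zero n hx0 (hfinj (by rw [h, map_zero]))
    have heq : u * f (x ^ ν) = f t := by
      apply mul_left_cancel₀ hxn
      calc f (x ^ n) * (u * f (x ^ ν)) = u * (f (x ^ ν) * f (x ^ n)) := by ring
        _ = u * f (x ^ (ν + n)) := by rw [← map_mul, ← pow_add]
        _ = f s := hfs.symm
        _ = f (x ^ n * t) := by rw [hxt]
        _ = f (x ^ n) * f t := by rw [map_mul]
    rw [heq]
    exact (hmem ν _).2 ⟨t, ht, rfl⟩
  -- main proof
  rw [hcond]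
  apply le_antisymm
  · intro z hz
    rw [Submodule.mem_div_iff_forall_mul_mem]
    intro w hw
    have hw' : w ∈ (1 : Submodule R K) / blowup R K I := by rw [hcond]; exact hw
    rw [Submodule.mem_div_iff_forall_mul_mem] at hw'
    rw [mul_comm]
    exact hw' z hz
  · intro z hz
    rw [Submodule.mem_div_iff_forall_mul_mem] at hz
    have h2 : z * f (x ^ ν) ∈ (1 : Submodule R K) / blowup R K I := by
      rw [Submodule.mem_div_iff_forall_mul_mem]
      intro u hu
      have heq : z * f (x ^ ν) * u = z * (u * f (x ^ ν)) := by ring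
      rw [heq]
      exact hz _ (hL u hu)
    rw [hcond] at h2
    obtain ⟨u, hu, huw⟩ := hfac _ h2
    have hzu : z = u := by
      apply mul_left_cancel₀ hcν0
      rw [mul_comm (f (x ^ ν)) z]
      exact huw
    rw [hzu]
    exact hu
end
end

section
/- The following conditions are equivalent: (A1) ω ⊆ Λ; (A2) ωΛ = Λ; (A3) ω:Λ = R:Λ; (A4) I^n = I^n ω ∩ R for all n ≥ ν; (A5) ωI^n = I^n for all n ≥ ν; (A6) there exists n > 0 with ωI^n = I^n. -/
open Submodule IsLocalRing

noncomputable section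

section MyAux

variable {R : Type*} [CommRing R] {K : Type*} [Field K] [Algebra R K]

private lemma my_sspan_mul_sspan (c d : K) (N : Submodule R K) :
    span R {c} * (span R {d} * N) = span R {c * d} * N := by
  rw [← mul_assoc, span_mul_span, Set.singleton_mul_singleton]

private lemma my_sspan_one_mul (N : Submodule R K) : span R {(1 : K)} * N = N := by
  rw [← one_eq_span, one_mul]

private lemma my_sspan_cancel {c : K} (hc : c ≠ 0) {A B : Submodule R K}
    (h : span R {c} * A ≤ span R {c} * B) : A ≤ B := by
  have h2 := mul_le_mul_right h (span R {c⁻¹})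
  rwa [my_sspan_mul_sspan, my_sspan_mul_sspan, inv_mul_cancel₀ hc, my_sspan_one_mul,
    my_sspan_one_mul] at h2

private lemma my_fg_of_le_fg [IsNoetherianRing R] {M : Type*} [AddCommGroup M] [Module R M]
    {N P : Submodule R M} (h : N ≤ P) (hP : P.FG) : N.FG := by
  have : IsNoetherian R P := isNoetherian_of_fg_of_noetherian P hP
  have h1 : (comap P.subtype N).FG := IsNoetherian.noetherian _
  have h2 := h1.map P.subtype
  rwa [map_comap_subtype, inf_eq_right.mpr h] at h2

private lemma my_div_mul_le (A B : Submodule R K) : A / B * B ≤ A :=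
  Submodule.le_div_iff_mul_le.mp le_rfl

private lemma my_div_div (A B C : Submodule R K) : A / (B * C) = A / B / C := by
  apply le_antisymm
  · rw [Submodule.le_div_iff_mul_le, Submodule.le_div_iff_mul_le, mul_assoc, mul_comm C B]
    exact my_div_mul_le A (B * C)
  · rw [Submodule.le_div_iff_mul_le, mul_comm B C, ← mul_assoc]
    exact le_trans (mul_le_mul_left (my_div_mul_le (A/B) C) _) (my_div_mul_le A B)

private lemma my_div_one (A : Submodule R K) : A / 1 = A := by
  apply le_antisymm
  · intro y hy
    have := mem_div_iff_forall_mul_mem.mp hy 1 (Submodule.one_le.mp le_rfl)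
    simpa using this
  · rw [Submodule.le_div_iff_mul_le, Submodule.mul_one]

private lemma my_div_sup (C A B : Submodule R K) : C / (A ⊔ B) = C / A ⊓ C / B := by
  apply le_antisymm
  · exact le_inf
      (by rw [Submodule.le_div_iff_mul_le]
          exact le_trans (mul_le_mul_right le_sup_left _) (my_div_mul_le _ _))
      (by rw [Submodule.le_div_iff_mul_le]
          exact le_trans (mul_le_mul_right le_sup_right _) (my_div_mul_le _ _))
  · rw [Submodule.le_div_iff_mul_le, Submodule.mul_sup]
    exact sup_le (le_trans (mul_le_mul_left inf_le_left _) (my_div_mul_le _ _))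
      (le_trans (mul_le_mul_left inf_le_right _) (my_div_mul_le _ _))

private lemma my_one_fg : (1 : Submodule R K).FG := by
  rw [one_eq_span]; exact fg_span_singleton 1

end MyAux
theorem stmt_7
    (R : Type*) [CommRing R] [IsDomain R] [IsLocalRing R] [IsNoetherianRing R]
    (K : Type*) [Field K] [Algebra R K] [IsFractionRing R K]
    [IsDiscreteValuationRing (integralClosure R K)]
    [Module.Finite R (integralClosure R K)]
    (hres : ∀ y : integralClosure R K, ∃ a : R,
      y - algebraMap R (integralClosure R K) a ∈ maximalIdeal (integralClosure R K))
    (hkinf : Infinite (ResidueField R))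
    (I : Ideal R) (hI0 : I ≠ ⊥) (hIrad : I.radical = maximalIdeal R)
    (hInp : ¬ I.IsPrincipal)
    (x : R) (hxI : x ∈ I)
    (ν : ℕ) (hν : IsLeast {n : ℕ | ∀ k ≥ n, I ^ (k + 1) = Ideal.span {x} * I ^ k} ν)
    (ω : Submodule R K) (hω1 : 1 ≤ ω) (hω2 : ω < ((integralClosure R K).toSubmodule))
    (hωω : ω / ω = 1)
    (hωdual : ∀ J : Submodule R K, J ≠ ⊥ → J.FG → ω / (ω / J) = J) :
    ((ω ≤ (blowup R K I)) ↔ ω * (blowup R K I) = (blowup R K I)) ∧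
    ((ω ≤ (blowup R K I)) ↔ ω / (blowup R K I) = (1 : Submodule R K) / (blowup R K I)) ∧
    ((ω ≤ (blowup R K I)) ↔ ∀ m ≥ ν, (idl R K I) ^ m = ((idl R K I) ^ m * ω) ⊓ 1) ∧
    ((ω ≤ (blowup R K I)) ↔ ∀ m ≥ ν, ω * (idl R K I) ^ m = (idl R K I) ^ m) ∧
    ((ω ≤ (blowup R K I)) ↔ ∃ m : ℕ, 0 < m ∧ ω * (idl R K I) ^ m = (idl R K I) ^ m) := by
  classical
  set J : Submodule R K := idl R K I with hJdef
  set xx : K := algebraMap R K x with hxxdef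
  set Λ : Submodule R K := blowup R K I with hΛdef
  -- basic nonvanishing
  have hxne : x ≠ 0 := by
    intro hx0
    obtain ⟨a, haI, hane⟩ := Submodule.ne_bot_iff I |>.mp hI0
    have h1 : I ^ (ν + 1) = ⊥ := by
      have := hν.1 ν le_rfl
      rw [hx0] at this
      simpa [Ideal.span_singleton_eq_bot.mpr rfl] using this
    have : a ^ (ν + 1) ∈ (⊥ : Ideal R) := h1 ▸ Ideal.pow_mem_pow haI (ν + 1)
    exact hane (pow_eq_zero_iff (Nat.succ_ne_zero ν) |>.mp (Ideal.mem_bot.mp this))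
  have hxxne : xx ≠ 0 := by
    simpa [hxxdef] using (map_ne_zero_iff (algebraMap R K) (IsFractionRing.injective R K)).mpr hxne
  -- idl is multiplicative
  have hlin : Algebra.linearMap R K = (Algebra.ofId R K).toLinearMap := rfl
  have hidl_mul : ∀ A B : Ideal R, idl R K (A * B) = idl R K A * idl R K B := by
    intro A B
    unfold idl
    rw [hlin]
    exact Submodule.map_mul A B (Algebra.ofId R K)
  have hidl_pow : ∀ n : ℕ, idl R K (I ^ n) = J ^ n := by
    intro n
    rw [hJdef]
    unfold idl
    rw [hlin]
    exact Submodule.map_pow I (Algebra.ofId R K) n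
  have hidl_span : idl R K (Ideal.span {x}) = span R {xx} := by
    unfold idl
    rw [Ideal.span, Submodule.map_span, Set.image_singleton]
    rfl
  -- structural facts about powers of J
  have hstep : ∀ m, ν ≤ m → J ^ (m + 1) = span R {xx} * J ^ m := by
    intro m hm
    have := congrArg (idl R K) (hν.1 m hm)
    rwa [hidl_mul, hidl_span, hidl_pow, hidl_pow] at this
  have hscale : ∀ k : ℕ, J ^ (ν + k) = span R {xx ^ k} * J ^ ν := by
    intro k
    induction k with
    | zero => rw [Nat.add_zero, pow_zero, my_sspan_one_mul]
    | succ k ih =>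
        rw [← Nat.add_assoc, hstep (ν + k) (Nat.le_add_right ν k), ih, my_sspan_mul_sspan,
          ← pow_succ']
  have hxxJ : xx ∈ J := ⟨x, hxI, rfl⟩
  have hxxpow : ∀ n : ℕ, xx ^ n ∈ J ^ n := by
    intro n
    induction n with
    | zero => rw [pow_zero, pow_zero]; exact Submodule.one_le.mp le_rfl
    | succ n ih => rw [pow_succ, pow_succ]; exact Submodule.mul_mem_mul ih hxxJ
  have hJle1 : ∀ n : ℕ, J ^ n ≤ 1 := by
    have hJ1 : J ≤ 1 := by
      rw [hJdef]; unfold idl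
      rintro _ ⟨a, -, rfl⟩
      rw [Submodule.one_eq_range]
      exact LinearMap.mem_range_self _ a
    intro n
    induction n with
    | zero => rw [pow_zero]
    | succ n ih =>
        rw [pow_succ]
        calc J ^ n * J ≤ 1 * 1 := mul_le_mul' ih hJ1
        _ = 1 := by rw [one_mul]
  have hJfg : ∀ n : ℕ, (J ^ n).FG := by
    intro n
    exact Submodule.FG.pow (Submodule.FG.map _ (IsNoetherian.noetherian I)) n
  have hJnbot : ∀ n : ℕ, J ^ n ≠ ⊥ := by
    intro n hb
    have := hxxpow n
    rw [hb, Submodule.mem_bot] at this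
    exact pow_ne_zero n hxxne this
  -- the colon modules D n = J^n : J^n
  have hDsucc : ∀ n : ℕ, J ^ n / J ^ n ≤ J ^ (n + 1) / J ^ (n + 1) := by
    intro n
    rw [Submodule.le_div_iff_mul_le, pow_succ, ← mul_assoc]
    exact mul_le_mul_left (my_div_mul_le _ _) _
  have hDmono : ∀ n m : ℕ, n ≤ m → J ^ n / J ^ n ≤ J ^ m / J ^ m := by
    intro n m hnm
    induction m with
    | zero => simpa [Nat.le_zero.mp hnm]
    | succ m ih =>
        rcases Nat.lt_or_ge n (m + 1) with h | h
        · exact le_trans (ih (Nat.lt_succ_iff.mp h)) (hDsucc m)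
        · have : n = m + 1 := le_antisymm hnm h
          rw [this]
  have hDstab : ∀ m, ν ≤ m → J ^ m / J ^ m = J ^ ν / J ^ ν := by
    intro m hm
    obtain ⟨k, rfl⟩ := Nat.exists_eq_add_of_le hm
    apply le_antisymm
    · rw [Submodule.le_div_iff_mul_le]
      apply my_sspan_cancel (pow_ne_zero k hxxne)
      rw [mul_left_comm, ← hscale k]
      exact my_div_mul_le _ _
    · exact hDmono ν (ν + k) (Nat.le_add_right ν k)
  have hblow : Λ = J ^ ν / J ^ ν := by
    rw [hΛdef]
    unfold blowup
    apply le_antisymm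
    · apply iSup_le
      intro n
      rcases Nat.le_total n ν with h | h
      · exact hDmono n ν h
      · exact (hDstab n h).le
    · exact le_iSup (fun n => J ^ n / J ^ n) ν
  have honeleD : ∀ n : ℕ, (1 : Submodule R K) ≤ J ^ n / J ^ n := by
    intro n
    rw [Submodule.le_div_iff_mul_le, one_mul]
  have hLJ : ∀ m, ν ≤ m → (J ^ ν / J ^ ν) * J ^ m = J ^ m := by
    intro m hm
    apply le_antisymm
    · rw [← hDstab m hm]
      exact my_div_mul_le _ _
    · conv_lhs => rw [← one_mul (J ^ m)]
      exact mul_le_mul_left (honeleD ν) _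
  have hLL : (J ^ ν / J ^ ν) * (J ^ ν / J ^ ν) ≤ J ^ ν / J ^ ν := by
    rw [Submodule.le_div_iff_mul_le, mul_assoc, hLJ ν le_rfl]
    exact my_div_mul_le _ _
  have hLsm : J ^ ν / J ^ ν = span R {(xx ^ ν)⁻¹} * J ^ ν := by
    apply le_antisymm
    · intro y hy
      have h1 : y * xx ^ ν ∈ J ^ ν := Submodule.mem_div_iff_forall_mul_mem.mp hy _ (hxxpow ν)
      exact Submodule.mem_span_singleton_mul.mpr ⟨y * xx ^ ν, h1, by
        rw [mul_comm y, ← mul_assoc, inv_mul_cancel₀ (pow_ne_zero ν hxxne), one_mul]⟩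
    · rw [Submodule.le_div_iff_mul_le, mul_assoc, ← pow_add, hscale ν, my_sspan_mul_sspan,
        inv_mul_cancel₀ (pow_ne_zero ν hxxne), my_sspan_one_mul]
  have hΛfg : Λ.FG := by
    rw [hblow, hLsm]
    exact Submodule.FG.mul (fg_span_singleton _) (hJfg ν)
  have hΛnbot : Λ ≠ ⊥ := by
    intro hb
    have : (1 : K) ∈ Λ := hblow ▸ honeleD ν (Submodule.one_le.mp le_rfl)
    rw [hb] at this
    exact (one_ne_zero : (1 : K) ≠ 0) (by simpa using this)
  have hωfg : ω.FG := by
    have hfin : Module.Finite R (Subalgebra.toSubmodule (integralClosure R K)) :=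
      ‹Module.Finite R (integralClosure R K)›
    have hSfg : (Subalgebra.toSubmodule (integralClosure R K)).FG :=
      Module.Finite.iff_fg.mp hfin
    exact my_fg_of_le_fg hω2.le hSfg
  have h1ω : (1 : K) ∈ ω := hω1 (Submodule.one_le.mp le_rfl)
  have hωnbot : ω ≠ ⊥ := by
    intro hb; rw [hb] at h1ω; exact (one_ne_zero : (1 : K) ≠ 0) (by simpa using h1ω)
  have hdivfg : ∀ m : ℕ, ((1 : Submodule R K) / J ^ m).FG := by
    intro m
    apply my_fg_of_le_fg (P := span R {(xx ^ m)⁻¹} * 1)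
    · intro y hy
      have h1 : y * xx ^ m ∈ (1 : Submodule R K) :=
        Submodule.mem_div_iff_forall_mul_mem.mp hy _ (hxxpow m)
      exact Submodule.mem_span_singleton_mul.mpr ⟨y * xx ^ m, h1, by
        rw [mul_comm y, ← mul_assoc, inv_mul_cancel₀ (pow_ne_zero m hxxne), one_mul]⟩
    · exact Submodule.FG.mul (fg_span_singleton _) my_one_fg
  -- the five equivalences
  have hA5 : (ω ≤ Λ) ↔ ∀ m, ν ≤ m → ω * J ^ m = J ^ m := by
    constructor
    · intro h m hm
      apply le_antisymm
      · calc ω * J ^ m ≤ (J ^ ν / J ^ ν) * J ^ m := mul_le_mul_left (hblow ▸ h) _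
        _ = J ^ m := hLJ m hm
      · conv_lhs => rw [← one_mul (J ^ m)]
        exact mul_le_mul_left hω1 _
    · intro h
      rw [hblow]
      rw [Submodule.le_div_iff_mul_le]
      exact (h ν le_rfl).le
  have hA6 : (ω ≤ Λ) ↔ ∃ m : ℕ, 0 < m ∧ ω * J ^ m = J ^ m := by
    constructor
    · intro h
      exact ⟨ν + 1, Nat.succ_pos ν, hA5.mp h (ν + 1) (Nat.le_succ ν)⟩
    · rintro ⟨m, _, hm⟩
      have h1 : ω ≤ J ^ m / J ^ m := Submodule.le_div_iff_mul_le.mpr hm.le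
      rw [hΛdef]
      exact le_trans h1 (le_iSup (fun n => J ^ n / J ^ n) m)
  have hA2 : (ω ≤ Λ) ↔ ω * Λ = Λ := by
    constructor
    · intro h
      apply le_antisymm
      · calc ω * Λ ≤ Λ * Λ := mul_le_mul_left h _
        _ ≤ Λ := by rw [hblow]; exact hLL
      · conv_lhs => rw [← one_mul Λ]
        exact mul_le_mul_left hω1 _
    · intro h
      calc ω = ω * 1 := (Submodule.mul_one ω).symm
      _ ≤ ω * Λ := mul_le_mul_right (hblow ▸ honeleD ν) _
      _ = Λ := h
  have hωΛfg : (ω * Λ).FG := hωfg.mul hΛfg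
  have hωΛnbot : ω * Λ ≠ ⊥ := by
    intro hb
    have : (1 : K) * 1 ∈ ω * Λ :=
      Submodule.mul_mem_mul h1ω (hblow ▸ honeleD ν (Submodule.one_le.mp le_rfl))
    rw [hb] at this
    exact (one_ne_zero : (1 : K) ≠ 0) (by simpa using this)
  have hA3 : (ω ≤ Λ) ↔ ω / Λ = (1 : Submodule R K) / Λ := by
    constructor
    · intro h
      have h2 : ω * Λ = Λ := hA2.mp h
      calc ω / Λ = ω / (ω * Λ) := by rw [h2]
      _ = ω / ω / Λ := my_div_div ω ω Λ
      _ = 1 / Λ := by rw [hωω]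
    · intro h3
      have e : (1 : Submodule R K) / Λ = ω / (ω * Λ) := by rw [my_div_div, hωω]
      have h4 : ω / (ω / Λ) = ω / (ω / (ω * Λ)) := by rw [h3, e]
      rw [hωdual Λ hΛnbot hΛfg, hωdual (ω * Λ) hωΛnbot hωΛfg] at h4
      exact hA2.mpr h4.symm
  have hA4 : (ω ≤ Λ) ↔ ∀ m, ν ≤ m → J ^ m = (J ^ m * ω) ⊓ 1 := by
    constructor
    · intro h m hm
      rw [mul_comm, hA5.mp h m hm]
      exact (inf_eq_left.mpr (hJle1 m)).symm
    · intro h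
      -- dual identity: ω / J^m = 1/J^m ⊔ ω for m ≥ ν
      have star : ∀ m, ν ≤ m → ω / J ^ m = (1 : Submodule R K) / J ^ m ⊔ ω := by
        intro m hm
        have e1 : (1 : Submodule R K) / J ^ m = ω / (ω * J ^ m) := by
          rw [my_div_div, hωω]
        have hωJfg : (ω * J ^ m).FG := hωfg.mul (hJfg m)
        have hωJnbot : ω * J ^ m ≠ ⊥ := by
          intro hb
          have : (1 : K) * xx ^ m ∈ ω * J ^ m := Submodule.mul_mem_mul h1ω (hxxpow m)
          rw [hb] at this
          exact pow_ne_zero m hxxne (by simpa using this)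
        have e2 : ω / ((1 : Submodule R K) / J ^ m) = ω * J ^ m := by
          rw [e1]; exact hωdual _ hωJnbot hωJfg
        have hEfg : ((1 : Submodule R K) / J ^ m ⊔ ω).FG := (hdivfg m).sup hωfg
        have hEnbot : (1 : Submodule R K) / J ^ m ⊔ ω ≠ ⊥ := by
          intro hb
          have : (1 : K) ∈ (1 : Submodule R K) / J ^ m ⊔ ω := Submodule.mem_sup_right h1ω
          rw [hb] at this
          exact (one_ne_zero : (1 : K) ≠ 0) (by simpa using this)
        have e3 : ω / ((1 : Submodule R K) / J ^ m ⊔ ω) = J ^ m := by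
          rw [my_div_sup, e2, hωω, mul_comm ω (J ^ m), ← h m hm]
        have := congrArg (fun N => ω / N) e3
        rw [hωdual _ hEnbot hEfg] at this
        exact this.symm
      -- a Nakayama argument gives ω ≤ 1 / J^ν
      have hscale1 : J ^ (ν + 1) = span R {xx} * J ^ ν := by
        simpa using hscale 1
      have c1 : span R {xx⁻¹} * ω ≤ ω / J ^ (ν + 1) := by
        rw [Submodule.le_div_iff_mul_le, hscale1, mul_mul_mul_comm, span_mul_span,
          Set.singleton_mul_singleton, inv_mul_cancel₀ hxxne, my_sspan_one_mul]
        calc ω * J ^ ν ≤ ω * 1 := mul_le_mul_right (hJle1 ν) _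
        _ = ω := Submodule.mul_one ω
      have c2 : ω ≤ span R {xx} * ((1 : Submodule R K) / J ^ (ν + 1)) ⊔ span R {xx} * ω := by
        have h5 : ω = span R {xx} * (span R {xx⁻¹} * ω) := by
          rw [my_sspan_mul_sspan, mul_inv_cancel₀ hxxne, my_sspan_one_mul]
        calc ω = span R {xx} * (span R {xx⁻¹} * ω) := h5
        _ ≤ span R {xx} * (ω / J ^ (ν + 1)) := mul_le_mul_right c1 _
        _ = span R {xx} * ((1 : Submodule R K) / J ^ (ν + 1) ⊔ ω) := by
            rw [star (ν + 1) (Nat.le_succ ν)]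
        _ = _ := Submodule.mul_sup _ _ _
      have c3 : span R {xx} * ((1 : Submodule R K) / J ^ (ν + 1)) ≤ (1 : Submodule R K) / J ^ ν := by
        rw [Submodule.le_div_iff_mul_le, mul_comm (span R {xx}), mul_assoc, ← hscale1]
        exact my_div_mul_le _ _
      have hkey : ω ≤ (1 : Submodule R K) / J ^ ν ⊔ span R {xx} * ω :=
        le_trans c2 (sup_le_sup_right c3 _)
      have hxm : x ∈ maximalIdeal R := hIrad ▸ Ideal.le_radical hxI
      set C : Submodule R K := (1 : Submodule R K) / J ^ ν with hCdef
      have hnak : Submodule.map C.mkQ ω = ⊥ := by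
        apply Submodule.eq_bot_of_le_smul_of_le_jacobson_bot (maximalIdeal R) _ (hωfg.map _)
        · rintro y' hy'
          obtain ⟨y, hyω, rfl⟩ := Submodule.mem_map.mp hy'
          obtain ⟨c, hc, z, hz, hczy⟩ := Submodule.mem_sup.mp (hkey hyω)
          obtain ⟨w, hw, hxwz⟩ := Submodule.mem_span_singleton_mul.mp hz
          have hqy : C.mkQ y = x • C.mkQ w := by
            rw [← hczy, map_add, ← hxwz]
            have hqc : C.mkQ c = 0 := by
              rw [Submodule.mkQ_apply, Submodule.Quotient.mk_eq_zero]; exact hc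
            have : xx * w = x • w := (Algebra.smul_def x w).symm
            rw [hqc, zero_add, this, map_smul]
          rw [hqy]
          exact Submodule.smul_mem_smul hxm (Submodule.mem_map_of_mem hw)
        · exact IsLocalRing.maximalIdeal_le_jacobson ⊥
      have hωC : ω ≤ C := by
        intro y hy
        have : C.mkQ y ∈ Submodule.map C.mkQ ω := Submodule.mem_map_of_mem hy
        rw [hnak] at this
        rw [← Submodule.Quotient.mk_eq_zero, ← Submodule.mkQ_apply]
        simpa using this
      have hωJ1 : ω * J ^ ν ≤ 1 := Submodule.le_div_iff_mul_le.mp hωC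
      have hfin : ω * J ^ ν = J ^ ν := by
        have h6 := h ν le_rfl
        rw [inf_eq_left.mpr (by rw [mul_comm]; exact hωJ1)] at h6
        rw [mul_comm]
        exact h6.symm
      exact hA6.mpr ⟨ν + 1, Nat.succ_pos ν, by
        rw [hstep ν le_rfl, ← mul_assoc, mul_comm ω, mul_assoc, hfin]⟩
  exact ⟨hA2, hA3, hA4, hA5, hA6⟩
end
end

section
/- Conditions (A) (ω ⊆ Λ, equivalently ωΛ = Λ) hold if and only if both Λ = Λ** and ω:Λ = ω(R:Λ) hold together with R:Λ ⊆ R:ω. -/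
open Submodule IsLocalRing

noncomputable section

theorem stmt_8
    (R : Type*) [CommRing R] [IsDomain R] [IsLocalRing R] [IsNoetherianRing R]
    (K : Type*) [Field K] [Algebra R K] [IsFractionRing R K]
    [IsDiscreteValuationRing (integralClosure R K)]
    [Module.Finite R (integralClosure R K)]
    (hres : ∀ y : integralClosure R K, ∃ a : R,
      y - algebraMap R (integralClosure R K) a ∈ maximalIdeal (integralClosure R K))
    (hkinf : Infinite (ResidueField R))
    (I : Ideal R) (hI0 : I ≠ ⊥) (hIrad : I.radical = maximalIdeal R)
    (hInp : ¬ I.IsPrincipal)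
    (x : R) (hxI : x ∈ I)
    (ν : ℕ) (hν : IsLeast {n : ℕ | ∀ k ≥ n, I ^ (k + 1) = Ideal.span {x} * I ^ k} ν)
    (ω : Submodule R K) (hω1 : 1 ≤ ω) (hω2 : ω < ((integralClosure R K).toSubmodule))
    (hωω : ω / ω = 1)
    (hωdual : ∀ J : Submodule R K, J ≠ ⊥ → J.FG → ω / (ω / J) = J) :
    (ω ≤ (blowup R K I)) ↔
      ((blowup R K I) = (1 : Submodule R K) / ((1 : Submodule R K) / (blowup R K I)) ∧ ω / (blowup R K I) = ω * ((1 : Submodule R K) / (blowup R K I)) ∧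
        (1 : Submodule R K) / (blowup R K I) ≤ (1 : Submodule R K) / ω) := by
  classical
  set Λ := blowup R K I with hΛdef
  set A : ℕ → Submodule R K := fun n => idl R K I ^ n with hAdef
  have hmono : Monotone (fun n => A n / A n) := by
    apply monotone_nat_of_le_succ
    intro n z hz
    rw [Submodule.mem_div_iff_forall_mul_mem] at hz ⊢
    intro y hy
    have hy' : y ∈ A n * idl R K I := by rwa [hAdef, ← pow_succ]
    have hzy : z * y ∈ A n * idl R K I := by
      refine Submodule.mul_induction_on hy' (fun a ha b hb => ?_) (fun y1 y2 h1 h2 => ?_)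
      · rw [← mul_assoc]; exact Submodule.mul_mem_mul (hz a ha) hb
      · rw [mul_add]; exact add_mem h1 h2
    show z * y ∈ A (n + 1)
    rw [show A (n + 1) = A n * idl R K I from pow_succ _ n]
    exact hzy
  have hmem : ∀ z : K, z ∈ Λ ↔ ∃ n, z ∈ A n / A n := fun z =>
    Submodule.mem_iSup_of_directed _ hmono.directed_le
  have hΛ1 : (1 : Submodule R K) ≤ Λ := by
    refine le_trans ?_ (le_iSup (fun n => A n / A n) 0)
    rw [Submodule.le_div_iff_mul_le, one_mul]
  have hΛmul : ∀ z ∈ Λ, ∀ w ∈ Λ, z * w ∈ Λ := by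
    intro z hz w hw
    obtain ⟨m, hm⟩ := (hmem z).mp hz
    obtain ⟨n, hn⟩ := (hmem w).mp hw
    have hm' := hmono (le_max_left m n) hm
    have hn' := hmono (le_max_right m n) hn
    refine (hmem _).mpr ⟨max m n, ?_⟩
    rw [Submodule.mem_div_iff_forall_mul_mem] at hm' hn' ⊢
    intro y hy
    rw [mul_assoc]
    exact hm' _ (hn' y hy)
  have hΛint : Λ ≤ Subalgebra.toSubmodule (integralClosure R K) := by
    intro z hz
    obtain ⟨n, hn⟩ := (hmem z).mp hz
    rw [Submodule.mem_div_iff_forall_mul_mem] at hn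
    obtain ⟨a, haI, ha0⟩ := Submodule.exists_mem_ne_zero_of_ne_bot hI0
    have hamem : algebraMap R K a ∈ idl R K I := ⟨a, haI, rfl⟩
    have hane : (algebraMap R K a) ^ n ≠ 0 :=
      pow_ne_zero n ((map_ne_zero_iff _ (IsFractionRing.injective R K)).mpr ha0)
    have hAbot : A n ≠ ⊥ := by
      rw [Submodule.ne_bot_iff]
      exact ⟨(algebraMap R K a) ^ n, Submodule.pow_mem_pow _ hamem n, hane⟩
    have hAfg : (A n).FG := ((IsNoetherian.noetherian I).map _).pow n
    have : IsIntegral R z := by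
      refine isIntegral_of_smul_mem_submodule (A := K) (A n) hAbot hAfg z fun w hw => ?_
      rw [smul_eq_mul]
      exact hn w hw
    exact this
  have hΛbot : Λ ≠ ⊥ := by
    intro hbot
    have h1 : (1 : K) ∈ Λ := Submodule.one_le.mp hΛ1
    rw [hbot, Submodule.mem_bot] at h1
    exact one_ne_zero h1
  have hNfg : (Subalgebra.toSubmodule (integralClosure R K)).FG := by
    have h := Module.Finite.fg_top (R := R) (M := integralClosure R K)
    exact (Submodule.fg_top _).mp h
  have hΛfg : Λ.FG := by
    haveI := isNoetherian_of_fg_of_noetherian _ hNfg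
    have h1 : (Λ.comap (Subalgebra.toSubmodule (integralClosure R K)).subtype).FG :=
      IsNoetherian.noetherian _
    have h2 := h1.map (Subalgebra.toSubmodule (integralClosure R K)).subtype
    rwa [Submodule.map_comap_subtype, inf_eq_right.mpr hΛint] at h2
  have hdual : ω / (ω / Λ) = Λ := hωdual Λ hΛbot hΛfg
  have one_mul_mem : ∀ {a w : K}, a ∈ ω → w ∈ (1 : Submodule R K) → a * w ∈ ω := by
    intro a w ha hw
    obtain ⟨r, hr⟩ := Submodule.mem_one.mp hw
    rw [← hr, mul_comm, ← Algebra.smul_def]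
    exact ω.smul_mem r ha
  constructor
  · intro h
    have key : ω / Λ = (1 : Submodule R K) / Λ := by
      apply le_antisymm
      · intro z hz
        rw [Submodule.mem_div_iff_forall_mul_mem] at hz ⊢
        intro y hy
        rw [← hωω, Submodule.mem_div_iff_forall_mul_mem]
        intro w hw
        have hyw : y * w ∈ Λ := hΛmul y hy w (h hw)
        rw [mul_assoc]
        exact hz _ hyw
      · intro z hz
        rw [Submodule.mem_div_iff_forall_mul_mem] at hz ⊢
        intro y hy
        exact hω1 (hz y hy)
    have cond3 : (1 : Submodule R K) / Λ ≤ (1 : Submodule R K) / ω := by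
      intro z hz
      rw [Submodule.mem_div_iff_forall_mul_mem] at hz ⊢
      intro y hy
      exact hz y (h hy)
    have mul_one_div : ω * ((1 : Submodule R K) / Λ) ≤ ω / Λ := by
      rw [Submodule.mul_le]
      intro a ha b hb
      rw [Submodule.mem_div_iff_forall_mul_mem] at hb ⊢
      intro y hy
      rw [mul_assoc]
      exact one_mul_mem ha (hb y hy)
    have cond2 : ω / Λ = ω * ((1 : Submodule R K) / Λ) := by
      refine le_antisymm ?_ mul_one_div
      rw [key]
      intro z hz
      have := Submodule.mul_mem_mul (Submodule.one_le.mp hω1) hz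
      rwa [one_mul] at this
    have cond1 : Λ = (1 : Submodule R K) / ((1 : Submodule R K) / Λ) := by
      apply le_antisymm
      · intro z hz
        rw [Submodule.mem_div_iff_forall_mul_mem]
        intro y hy
        rw [Submodule.mem_div_iff_forall_mul_mem] at hy
        rw [mul_comm]
        exact hy z hz
      · calc (1 : Submodule R K) / ((1 : Submodule R K) / Λ)
            = (1 : Submodule R K) / (ω / Λ) := by rw [key]
          _ ≤ ω / (ω / Λ) := by
              intro z hz
              rw [Submodule.mem_div_iff_forall_mul_mem] at hz ⊢
              exact fun y hy => hω1 (hz y hy)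
          _ = Λ := hdual
    exact ⟨cond1, cond2, cond3⟩
  · rintro ⟨h1, h2, h3⟩
    have hωinv : ω * ((1 : Submodule R K) / ω) ≤ 1 := by
      rw [Submodule.mul_le]
      intro a ha b hb
      rw [Submodule.mem_div_iff_forall_mul_mem] at hb
      rw [mul_comm]
      exact hb a ha
    have hd : ω / Λ ≤ (1 : Submodule R K) := by
      rw [h2]
      exact le_trans (mul_le_mul' le_rfl h3) hωinv
    rw [← hdual]
    intro a ha
    rw [Submodule.mem_div_iff_forall_mul_mem]
    intro z hz
    exact one_mul_mem ha (hd hz)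
end
end
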